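/- For any (L,p) ∈ so(n) × ℝⁿ: (i) an element of the form (1,d) ∈ E(n) satisfies Ad*_{(1,d)}(L,p) = (L,p) if and only if μ(p,d) = 0; and (ii) the image of the coadjoint isotropy subgroup {(r,d) ∈ E(n) : Ad*_{(r,d)}(L,p) = (L,p)} under the projection (r,d) ↦ r is exactly {r ∈ O(n) : r p = p and r L r⁻¹ − L ∈ {μ(p,d) : d ∈ ℝⁿ}}. (This is the exact sequence {0} → ker τ_p → G_{(L,p)} → (H_p)_{ι*_p L} → {e}.) -/
import Mathlib


open Matrix

abbrev Mat (n : ℕ) := Matrix (Fin n) (Fin n) ℝ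
abbrev Vec (n : ℕ) := Fin n → ℝ

/-- `r` is an orthogonal matrix. -/
def IsOrth {n : ℕ} (r : Mat n) : Prop := r * rᵀ = 1 ∧ rᵀ * r = 1

/-- `ω` is skew-symmetric. -/
def IsSkew {n : ℕ} (ω : Mat n) : Prop := ωᵀ = -ω

/-- Adjoint action of `(r,d) ∈ E(n)` on `(ω,v) ∈ so(n) × ℝⁿ`. -/
noncomputable def Ad {n : ℕ} (r : Mat n) (d : Vec n) (ω : Mat n) (v : Vec n) :
    Mat n × Vec n :=
  (r * ω * r⁻¹, r *ᵥ v - (r * ω * r⁻¹) *ᵥ d)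

/-- The momentum map `μ(p,d) = ½(p dᵀ − d pᵀ)`. -/
noncomputable def mu {n : ℕ} (p d : Vec n) : Mat n :=
  (1/2 : ℝ) • (vecMulVec p d - vecMulVec d p)

/-- Coadjoint action of `(r,d) ∈ E(n)` on `(L,p) ∈ so(n)* × (ℝⁿ)* ≃ so(n) × ℝⁿ`. -/
noncomputable def CoAd {n : ℕ} (r : Mat n) (d : Vec n) (L : Mat n) (p : Vec n) :
    Mat n × Vec n :=
  (r * L * r⁻¹ + mu (r *ᵥ p) d, r *ᵥ p)

lemma mu_neg {n : ℕ} (p d : Vec n) : mu p (-d) = - mu p d := by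
  ext i j
  simp [mu, vecMulVec]
  ring

/-- The exact sequence `{0} → ker τ_p → G_{(L,p)} → (H_p)_{ι*_p L} → {e}` for the
coadjoint isotropy subgroup. -/
theorem stmt10 {n : ℕ} (L : Mat n) (hL : IsSkew L) (p : Vec n) :
    (∀ d : Vec n, CoAd 1 d L p = (L, p) ↔ mu p d = 0) ∧
    {r : Mat n | IsOrth r ∧ ∃ d : Vec n, CoAd r d L p = (L, p)} =
      {r : Mat n | IsOrth r ∧ r *ᵥ p = p ∧ ∃ d : Vec n, r * L * r⁻¹ - L = mu p d} := by
  constructor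
  · intro d
    simp [CoAd, Prod.ext_iff, add_eq_left]
  · ext r
    simp only [Set.mem_setOf_eq, CoAd, Prod.ext_iff]
    constructor
    · rintro ⟨hr, d, h1, h2⟩
      refine ⟨hr, h2, -d, ?_⟩
      rw [h2] at h1
      rw [mu_neg, eq_sub_of_add_eq h1]
      abel
    · rintro ⟨hr, hp, d, hd⟩
      refine ⟨hr, -d, ?_, hp⟩
      rw [hp, mu_neg, ← hd]
      abel
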